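/- (Friedman bound, binary case) If C is an orthogonal array OA(N,n,2,t) with 1 ≤ t ≤ n, then N ≥ 2^n (1 - n/(2(t+1))). -/

import Mathlib

open Finset

private def chi {n : ℕ} (S : Finset (Fin n)) (x : Fin n → Fin 2) : ℤ :=
  ∏ i ∈ S, (1 - 2 * ((x i : ℕ) : ℤ))

private lemma sum_all_subsets {n : ℕ} (c : Fin n → ℤ) :
    ∑ S : Finset (Fin n), ∏ i ∈ S, c i = ∏ i, (c i + 1) := by
  have h := Finset.prod_add c (fun _ => (1:ℤ)) Finset.univ
  simp only [Finset.prod_const_one, mul_one, Finset.powerset_univ] at h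
  rw [h]

private lemma factor_ite (a b : Fin 2) :
    (1 - 2 * ((a : ℕ) : ℤ)) * (1 - 2 * ((b : ℕ) : ℤ)) + 1 = if a = b then 2 else 0 := by
  revert a b; decide

private lemma factor_bound (a b : Fin 2) :
    (1 - 2 * ((a : ℕ) : ℤ)) * (1 - 2 * ((b : ℕ) : ℤ)) ≤ 1 ∧
    -1 ≤ (1 - 2 * ((a : ℕ) : ℤ)) * (1 - 2 * ((b : ℕ) : ℤ)) := by
  revert a b; decide

private lemma chi_mul {n : ℕ} (S : Finset (Fin n)) (x y : Fin n → Fin 2) :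
    chi S x * chi S y = ∏ i ∈ S, ((1 - 2 * ((x i : ℕ) : ℤ)) * (1 - 2 * ((y i : ℕ) : ℤ))) := by
  rw [chi, chi, ← Finset.prod_mul_distrib]

private lemma orth {n : ℕ} (x y : Fin n → Fin 2) :
    ∑ S : Finset (Fin n), chi S x * chi S y = if x = y then 2 ^ n else 0 := by
  simp only [chi_mul]
  rw [sum_all_subsets]
  have h : ∀ i, (1 - 2 * ((x i : ℕ) : ℤ)) * (1 - 2 * ((y i : ℕ) : ℤ)) + 1
      = if x i = y i then 2 else 0 := fun i => factor_ite (x i) (y i)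
  rw [Finset.prod_congr rfl fun i _ => h i]
  by_cases hxy : x = y
  · subst hxy; simp
  · rw [if_neg hxy]
    obtain ⟨i, hi⟩ := Function.ne_iff.mp hxy
    exact Finset.prod_eq_zero (Finset.mem_univ i) (if_neg hi)

private lemma orth_signed {n : ℕ} (i₀ : Fin n) (x y : Fin n → Fin 2) :
    0 ≤ ∑ S : Finset (Fin n), (if i₀ ∈ S then (-1:ℤ) else 1) * (chi S x * chi S y) := by
  set c : Fin n → ℤ := fun i => (1 - 2 * ((x i : ℕ) : ℤ)) * (1 - 2 * ((y i : ℕ) : ℤ)) with hc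
  set d : Fin n → ℤ := fun i => if i = i₀ then -c i else c i with hd
  have key : ∀ S : Finset (Fin n),
      (if i₀ ∈ S then (-1:ℤ) else 1) * (chi S x * chi S y) = ∏ i ∈ S, d i := by
    intro S
    rw [chi_mul]
    by_cases hi : i₀ ∈ S
    · rw [if_pos hi, ← Finset.mul_prod_erase S d hi, ← Finset.mul_prod_erase S c hi]
      have h1 : d i₀ = -c i₀ := by simp [hd]
      have h2 : ∏ i ∈ S.erase i₀, d i = ∏ i ∈ S.erase i₀, c i :=
        Finset.prod_congr rfl fun i hi' => by
          simp [hd, Finset.ne_of_mem_erase hi']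
      rw [h1, h2]; ring
    · rw [if_neg hi, one_mul]
      refine Finset.prod_congr rfl fun i hi' => ?_
      have : i ≠ i₀ := fun h => hi (h ▸ hi')
      simp [hd, this, hc]
  rw [Finset.sum_congr rfl fun S _ => key S, sum_all_subsets]
  apply Finset.prod_nonneg
  intro i _
  by_cases h : i = i₀
  · subst h
    simp only [hd, if_pos rfl]
    have := (factor_bound (x i) (y i)).1
    simp only [hc]; linarith
  · simp only [hd, if_neg h]
    have := (factor_bound (x i) (y i)).2
    simp only [hc]; linarith

private lemma chi_eq_prod_univ {n : ℕ} (S : Finset (Fin n)) (x : Fin n → Fin 2) :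
    chi S x = ∏ i : Fin n, (if i ∈ S then (1 - 2 * ((x i : ℕ) : ℤ)) else 1) := by
  rw [chi, Finset.prod_ite_mem, Finset.univ_inter]

private lemma sum_chi_zero {n : ℕ} (S : Finset (Fin n)) (hS : S.Nonempty) :
    ∑ g : Fin n → Fin 2, chi S g = 0 := by
  simp only [chi_eq_prod_univ]
  rw [← Fintype.piFinset_univ,
    ← Finset.prod_univ_sum (fun _ => (Finset.univ : Finset (Fin 2)))
      (fun i (b : Fin 2) => if i ∈ S then 1 - 2 * ((b : ℕ) : ℤ) else 1)]
  obtain ⟨i₀, hi₀⟩ := hS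
  apply Finset.prod_eq_zero (Finset.mem_univ i₀)
  simp [hi₀, Fin.sum_univ_two]

private lemma fin2_sum1 (a : Fin 2) :
    ∑ b : Fin 2, (if a = b then (1:ℤ) else 0) * (1 - 2 * ((b : ℕ) : ℤ))
      = 1 - 2 * ((a : ℕ) : ℤ) := by
  revert a; decide

private lemma fin2_sum2 (a : Fin 2) :
    ∑ b : Fin 2, (if a = b then (1:ℤ) else 0) = 1 := by
  revert a; decide

private lemma step_A {n t : ℕ} (S S' : Finset (Fin n)) (hsub : S ⊆ S') (hcard : S'.card = t)
    (x : Fin n → Fin 2) :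
    ∑ g : Fin n → Fin 2, (if ∀ i ∈ S', x i = g i then (1:ℤ) else 0) * chi S g
      = 2 ^ (n - t) * chi S x := by
  have hform : ∀ g : Fin n → Fin 2,
      (if ∀ i ∈ S', x i = g i then (1:ℤ) else 0) * chi S g
        = ∏ i : Fin n,
            ((if i ∈ S' then (if x i = g i then (1:ℤ) else 0) else 1)
              * (if i ∈ S then (1 - 2 * ((g i : ℕ) : ℤ)) else 1)) := by
    intro g
    have e1 : (if ∀ i ∈ S', x i = g i then (1:ℤ) else 0)
        = ∏ i : Fin n, (if i ∈ S' then (if x i = g i then (1:ℤ) else 0) else 1) := by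
      rw [Finset.prod_ite_mem, Finset.univ_inter, Finset.prod_boole]
      simp
    rw [e1, chi_eq_prod_univ, ← Finset.prod_mul_distrib]
  rw [Finset.sum_congr rfl fun g _ => hform g, ← Fintype.piFinset_univ,
    ← Finset.prod_univ_sum (fun _ => (Finset.univ : Finset (Fin 2)))
      (fun i (b : Fin 2) =>
        (if i ∈ S' then (if x i = b then (1:ℤ) else 0) else 1)
          * (if i ∈ S then (1 - 2 * ((b : ℕ) : ℤ)) else 1))]
  have hfac : ∀ i : Fin n,
      (∑ b : Fin 2, (if i ∈ S' then (if x i = b then (1:ℤ) else 0) else 1)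
          * (if i ∈ S then (1 - 2 * ((b : ℕ) : ℤ)) else 1))
        = (if i ∈ S then (1 - 2 * ((x i : ℕ) : ℤ)) else 1) * (if i ∈ S' then 1 else 2) := by
    intro i
    by_cases hiS : i ∈ S
    · have hiS' : i ∈ S' := hsub hiS
      simp only [if_pos hiS, if_pos hiS']
      rw [fin2_sum1 (x i)]; ring
    · by_cases hiS' : i ∈ S'
      · simp only [if_neg hiS, if_pos hiS']
        simp only [mul_one]
        rw [fin2_sum2 (x i)]
      · simp only [if_neg hiS, if_neg hiS']
        simp [Fin.sum_univ_two]
  rw [Finset.prod_congr rfl fun i _ => hfac i, Finset.prod_mul_distrib,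
    ← chi_eq_prod_univ]
  have : ∏ i : Fin n, (if i ∈ S' then (1:ℤ) else 2) = 2 ^ (n - t) := by
    have h1 : ∀ i : Fin n, (if i ∈ S' then (1:ℤ) else 2) = (if i ∈ S'ᶜ then 2 else 1) := by
      intro i; by_cases h : i ∈ S' <;> simp [h]
    rw [Finset.prod_congr rfl fun i _ => h1 i, Finset.prod_ite_mem, Finset.univ_inter,
      Finset.prod_const, Finset.card_compl, hcard]
    simp
  rw [this]; ring

private lemma strength {n t N : ℕ} (f : (Fin n → Fin 2) → ℕ) (htn : t ≤ n)
    (hOA : ∀ s : Finset (Fin n), s.card = t → ∀ g : Fin n → Fin 2,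
      (∑ x ∈ Finset.univ.filter (fun x : Fin n → Fin 2 => ∀ i ∈ s, x i = g i), f x)
        * 2 ^ t = N)
    (S : Finset (Fin n)) (hS : S.Nonempty) (hSt : S.card ≤ t) :
    ∑ x : Fin n → Fin 2, (f x : ℤ) * chi S x = 0 := by
  obtain ⟨S', hsub, hcard⟩ := Finset.exists_superset_card_eq hSt (by simpa using htn)
  have key : ((2:ℤ) ^ (n - t) * 2 ^ t) * ∑ x : Fin n → Fin 2, (f x : ℤ) * chi S x = 0 := by
    have h1 : ∀ x : Fin n → Fin 2, (2:ℤ) ^ (n - t) * ((f x : ℤ) * chi S x)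
        = ∑ g : Fin n → Fin 2,
            (f x : ℤ) * ((if ∀ i ∈ S', x i = g i then (1:ℤ) else 0) * chi S g) := by
      intro x
      rw [← Finset.mul_sum, step_A S S' hsub hcard x]
      ring
    calc ((2:ℤ) ^ (n - t) * 2 ^ t) * ∑ x : Fin n → Fin 2, (f x : ℤ) * chi S x
        = (2:ℤ) ^ t * ∑ x : Fin n → Fin 2, (2:ℤ) ^ (n-t) * ((f x : ℤ) * chi S x) := by
          rw [Finset.mul_sum, Finset.mul_sum]
          apply Finset.sum_congr rfl; intros; ring
      _ = (2:ℤ) ^ t * ∑ x : Fin n → Fin 2, ∑ g : Fin n → Fin 2,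
            (f x : ℤ) * ((if ∀ i ∈ S', x i = g i then (1:ℤ) else 0) * chi S g) := by
          rw [Finset.sum_congr rfl fun x _ => h1 x]
      _ = (2:ℤ) ^ t * ∑ g : Fin n → Fin 2, ∑ x : Fin n → Fin 2,
            (f x : ℤ) * ((if ∀ i ∈ S', x i = g i then (1:ℤ) else 0) * chi S g) := by
          rw [Finset.sum_comm]
      _ = ∑ g : Fin n → Fin 2,
            (((∑ x ∈ Finset.univ.filter
                (fun x : Fin n → Fin 2 => ∀ i ∈ S', x i = g i), f x) : ℕ) : ℤ)
              * 2 ^ t * chi S g := by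
          rw [Finset.mul_sum]
          apply Finset.sum_congr rfl
          intro g _
          have : ∑ x : Fin n → Fin 2,
              (f x : ℤ) * ((if ∀ i ∈ S', x i = g i then (1:ℤ) else 0) * chi S g)
            = (∑ x : Fin n → Fin 2,
                (if ∀ i ∈ S', x i = g i then (f x : ℤ) else 0)) * chi S g := by
            rw [Finset.sum_mul]
            apply Finset.sum_congr rfl
            intro x _
            by_cases h : ∀ i ∈ S', x i = g i <;> simp [h]
          rw [this, ← Finset.sum_filter]
          push_cast
          ring
      _ = ∑ g : Fin n → Fin 2, (N : ℤ) * chi S g := by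
          apply Finset.sum_congr rfl
          intro g _
          have hc : (((∑ x ∈ Finset.univ.filter
              (fun x : Fin n → Fin 2 => ∀ i ∈ S', x i = g i), f x) : ℕ) : ℤ) * 2 ^ t
              = (N : ℤ) := by exact_mod_cast hOA S' hcard g
          rw [hc]
      _ = (N : ℤ) * ∑ g : Fin n → Fin 2, chi S g := by rw [Finset.mul_sum]
      _ = 0 := by rw [sum_chi_zero S hS, mul_zero]
  have h2 : ((2:ℤ) ^ (n - t) * 2 ^ t) ≠ 0 := by positivity
  exact (mul_eq_zero.mp key).resolve_left h2

private lemma expand {n : ℕ} (f : (Fin n → Fin 2) → ℕ) (w : Finset (Fin n) → ℤ) :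
    ∑ S : Finset (Fin n), w S * (∑ x : Fin n → Fin 2, (f x : ℤ) * chi S x) ^ 2
      = ∑ x : Fin n → Fin 2, ∑ y : Fin n → Fin 2,
          ((f x : ℤ) * (f y : ℤ)) * (∑ S : Finset (Fin n), w S * (chi S x * chi S y)) := by
  calc ∑ S : Finset (Fin n), w S * (∑ x : Fin n → Fin 2, (f x : ℤ) * chi S x) ^ 2
      = ∑ S : Finset (Fin n), ∑ x : Fin n → Fin 2, ∑ y : Fin n → Fin 2,
          ((f x : ℤ) * (f y : ℤ)) * (w S * (chi S x * chi S y)) := by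
        refine Finset.sum_congr rfl fun S _ => ?_
        rw [sq, Finset.sum_mul_sum, Finset.mul_sum]
        refine Finset.sum_congr rfl fun x _ => ?_
        rw [Finset.mul_sum]
        refine Finset.sum_congr rfl fun y _ => ?_
        ring
    _ = ∑ x : Fin n → Fin 2, ∑ S : Finset (Fin n), ∑ y : Fin n → Fin 2,
          ((f x : ℤ) * (f y : ℤ)) * (w S * (chi S x * chi S y)) := Finset.sum_comm
    _ = ∑ x : Fin n → Fin 2, ∑ y : Fin n → Fin 2, ∑ S : Finset (Fin n),
          ((f x : ℤ) * (f y : ℤ)) * (w S * (chi S x * chi S y)) := by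
        exact Finset.sum_congr rfl fun x _ => Finset.sum_comm
    _ = ∑ x : Fin n → Fin 2, ∑ y : Fin n → Fin 2,
          ((f x : ℤ) * (f y : ℤ)) * (∑ S : Finset (Fin n), w S * (chi S x * chi S y)) := by
        refine Finset.sum_congr rfl fun x _ => Finset.sum_congr rfl fun y _ => ?_
        rw [Finset.mul_sum]

private lemma key1 {n : ℕ} (f : (Fin n → Fin 2) → ℕ) :
    ∑ S : Finset (Fin n), (∑ x : Fin n → Fin 2, (f x : ℤ) * chi S x) ^ 2
      = 2 ^ n * ∑ x : Fin n → Fin 2, (f x : ℤ) ^ 2 := by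
  have h := expand f (fun _ => 1)
  simp only [one_mul] at h
  rw [h]
  calc ∑ x : Fin n → Fin 2, ∑ y : Fin n → Fin 2,
        ((f x : ℤ) * (f y : ℤ)) * (∑ S : Finset (Fin n), chi S x * chi S y)
      = ∑ x : Fin n → Fin 2, ∑ y : Fin n → Fin 2,
          (if x = y then ((f x : ℤ) * (f y : ℤ)) * 2 ^ n else 0) := by
        refine Finset.sum_congr rfl fun x _ => Finset.sum_congr rfl fun y _ => ?_
        rw [orth]
        by_cases h : x = y <;> simp [h]
    _ = ∑ x : Fin n → Fin 2, ((f x : ℤ) * (f x : ℤ)) * 2 ^ n := by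
        refine Finset.sum_congr rfl fun x _ => ?_
        rw [Finset.sum_ite_eq]
        simp
    _ = 2 ^ n * ∑ x : Fin n → Fin 2, (f x : ℤ) ^ 2 := by
        rw [Finset.mul_sum]
        refine Finset.sum_congr rfl fun x _ => ?_
        ring

private lemma key2 {n : ℕ} (f : (Fin n → Fin 2) → ℕ) (i₀ : Fin n) :
    0 ≤ ∑ S : Finset (Fin n), (if i₀ ∈ S then (-1:ℤ) else 1)
        * (∑ x : Fin n → Fin 2, (f x : ℤ) * chi S x) ^ 2 := by
  rw [expand f (fun S => if i₀ ∈ S then (-1:ℤ) else 1)]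
  refine Finset.sum_nonneg fun x _ => Finset.sum_nonneg fun y _ => ?_
  exact mul_nonneg (by positivity) (orth_signed i₀ x y)

/-- Friedman bound, binary case: for an orthogonal array OA(N,n,2,t) (multiset,
given by a multiplicity function f) with 1 ≤ t ≤ n, N ≥ 2^n (1 - n/(2(t+1))). -/
theorem stmt_2 (n t N : ℕ) (f : (Fin n → Fin 2) → ℕ)
    (ht1 : 1 ≤ t) (htn : t ≤ n) (hN : 1 ≤ N)
    (htotal : ∑ x : Fin n → Fin 2, f x = N)
    (hOA : ∀ s : Finset (Fin n), s.card = t → ∀ g : Fin n → Fin 2,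
      (∑ x ∈ Finset.univ.filter (fun x : Fin n → Fin 2 => ∀ i ∈ s, x i = g i), f x)
        * 2 ^ t = N) :
    (N : ℝ) ≥ 2 ^ n * (1 - n / (2 * (t + 1))) := by
  have hFempty : ∑ x : Fin n → Fin 2, (f x : ℤ) * chi (∅ : Finset (Fin n)) x = (N:ℤ) := by
    simp only [chi, Finset.prod_empty, mul_one]
    rw [← Nat.cast_sum, htotal]
  -- upper bound on T
  have upper : ∑ S : Finset (Fin n), (2*(t:ℤ)+2-2*(S.card:ℤ))
        * (∑ x : Fin n → Fin 2, (f x : ℤ) * chi S x) ^ 2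
      ≤ (2*(t:ℤ)+2) * (N:ℤ)^2 := by
    have hle : ∀ S : Finset (Fin n), (2*(t:ℤ)+2-2*(S.card:ℤ))
          * (∑ x : Fin n → Fin 2, (f x : ℤ) * chi S x) ^ 2
        ≤ (if S = (∅ : Finset (Fin n)) then (2*(t:ℤ)+2) * (N:ℤ)^2 else 0) := by
      intro S
      by_cases hSe : S = ∅
      · subst hSe
        rw [if_pos rfl, hFempty]
        simp
      · rw [if_neg hSe]
        by_cases hto : S.card ≤ t
        · rw [strength f htn hOA S (Finset.nonempty_iff_ne_empty.mpr hSe) hto]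
          simp
        · have hc : (t:ℤ) + 1 ≤ (S.card : ℤ) := by
            have : t + 1 ≤ S.card := by omega
            exact_mod_cast this
          have h1 : (2*(t:ℤ)+2-2*(S.card:ℤ)) ≤ 0 := by linarith
          nlinarith [sq_nonneg (∑ x : Fin n → Fin 2, (f x : ℤ) * chi S x)]
    calc ∑ S : Finset (Fin n), (2*(t:ℤ)+2-2*(S.card:ℤ))
          * (∑ x : Fin n → Fin 2, (f x : ℤ) * chi S x) ^ 2
        ≤ ∑ S : Finset (Fin n),
            (if S = (∅ : Finset (Fin n)) then (2*(t:ℤ)+2) * (N:ℤ)^2 else 0) :=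
          Finset.sum_le_sum fun S _ => hle S
      _ = (2*(t:ℤ)+2) * (N:ℤ)^2 := by
          rw [Finset.sum_ite_eq']
          simp
  -- coefficient decomposition
  have coeffid : ∀ S : Finset (Fin n), (2*(t:ℤ)+2-2*(S.card:ℤ))
      = (2*(t:ℤ)+2-(n:ℤ)) + ∑ i : Fin n, (if i ∈ S then (-1:ℤ) else 1) := by
    intro S
    have h1 : ∀ i : Fin n, (if i ∈ S then (-1:ℤ) else 1)
        = 1 - 2 * (if i ∈ S then (1:ℤ) else 0) := by
      intro i; by_cases h : i ∈ S <;> simp [h]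
    have h2 : ∑ i : Fin n, (if i ∈ S then (1:ℤ) else 0) = (S.card : ℤ) := by
      rw [Finset.sum_ite_mem, Finset.univ_inter, Finset.sum_const]
      simp
    rw [Finset.sum_congr rfl fun i _ => h1 i, Finset.sum_sub_distrib, ← Finset.mul_sum, h2,
      Finset.sum_const, Finset.card_univ, Fintype.card_fin]
    ring
  -- lower bound on T
  have lower : (2*(t:ℤ)+2-(n:ℤ)) * (2^n * ∑ x : Fin n → Fin 2, (f x : ℤ)^2)
      ≤ ∑ S : Finset (Fin n), (2*(t:ℤ)+2-2*(S.card:ℤ))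
          * (∑ x : Fin n → Fin 2, (f x : ℤ) * chi S x) ^ 2 := by
    have hdecomp : ∑ S : Finset (Fin n), (2*(t:ℤ)+2-2*(S.card:ℤ))
          * (∑ x : Fin n → Fin 2, (f x : ℤ) * chi S x) ^ 2
        = (2*(t:ℤ)+2-(n:ℤ))
            * ∑ S : Finset (Fin n), (∑ x : Fin n → Fin 2, (f x : ℤ) * chi S x) ^ 2
          + ∑ i : Fin n, ∑ S : Finset (Fin n), (if i ∈ S then (-1:ℤ) else 1)
              * (∑ x : Fin n → Fin 2, (f x : ℤ) * chi S x) ^ 2 := by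
      have hswap := Finset.sum_comm (s := (Finset.univ : Finset (Fin n)))
        (t := (Finset.univ : Finset (Finset (Fin n))))
        (f := fun i S => (if i ∈ S then (-1:ℤ) else 1)
          * (∑ x : Fin n → Fin 2, (f x : ℤ) * chi S x) ^ 2)
      rw [Finset.mul_sum, hswap, ← Finset.sum_add_distrib]
      refine Finset.sum_congr rfl fun S _ => ?_
      rw [coeffid S, ← Finset.sum_mul, add_mul]
    rw [hdecomp, key1]
    have hnn : 0 ≤ ∑ i : Fin n, ∑ S : Finset (Fin n), (if i ∈ S then (-1:ℤ) else 1)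
        * (∑ x : Fin n → Fin 2, (f x : ℤ) * chi S x) ^ 2 :=
      Finset.sum_nonneg fun i _ => key2 f i
    linarith
  -- sum of squares ≥ N
  have hsq : (N:ℤ) ≤ ∑ x : Fin n → Fin 2, (f x : ℤ)^2 := by
    have h1 : ∀ x : Fin n → Fin 2, (f x : ℤ) ≤ (f x : ℤ)^2 := by
      intro x
      have : f x ≤ f x ^ 2 := Nat.le_self_pow (by norm_num) (f x)
      exact_mod_cast this
    calc (N:ℤ) = ∑ x : Fin n → Fin 2, (f x : ℤ) := by rw [← Nat.cast_sum, htotal]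
      _ ≤ ∑ x : Fin n → Fin 2, (f x : ℤ)^2 := Finset.sum_le_sum fun x _ => h1 x
  -- integer inequality
  have hInt : (2*(t:ℤ)+2-(n:ℤ)) * 2^n ≤ (2*(t:ℤ)+2) * (N:ℤ) := by
    have hNpos : (0:ℤ) < (N:ℤ) := by exact_mod_cast hN
    by_cases ha : 0 ≤ (2*(t:ℤ)+2-(n:ℤ))
    · have c1 : (2*(t:ℤ)+2-(n:ℤ)) * (2^n * (N:ℤ))
          ≤ (2*(t:ℤ)+2-(n:ℤ)) * (2^n * ∑ x : Fin n → Fin 2, (f x : ℤ)^2) := by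
        apply mul_le_mul_of_nonneg_left _ ha
        apply mul_le_mul_of_nonneg_left hsq (by positivity)
      have h5 : ((2*(t:ℤ)+2-(n:ℤ)) * 2^n) * (N:ℤ) ≤ ((2*(t:ℤ)+2) * (N:ℤ)) * (N:ℤ) := by
        nlinarith [c1, lower, upper]
      exact le_of_mul_le_mul_right h5 hNpos
    · push_neg at ha
      have h6 : (2*(t:ℤ)+2-(n:ℤ)) * 2^n ≤ 0 :=
        mul_nonpos_iff.mpr (Or.inr ⟨le_of_lt ha, by positivity⟩)
      have h7 : (0:ℤ) ≤ (2*(t:ℤ)+2) * (N:ℤ) := by positivity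
      linarith
  -- conclude over ℝ
  have h2pos : (0:ℝ) < 2*(t:ℝ)+2 := by positivity
  rw [ge_iff_le]
  have heq : (2:ℝ)^n * (1 - (n:ℝ)/(2*((t:ℝ)+1))) = ((2*(t:ℝ)+2-(n:ℝ)) * 2^n)/(2*(t:ℝ)+2) := by
    field_simp
  rw [show ((2:ℝ) * ((t:ℝ)+1)) = 2*(t:ℝ)+2 by ring] at heq ⊢
  rw [heq, div_le_iff₀ h2pos]
  have hr : ((2*(t:ℝ)+2-(n:ℝ)) * 2^n) ≤ (2*(t:ℝ)+2) * (N:ℝ) := by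
    exact_mod_cast hInt
  linarith
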